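/- Let A¹_k = N · M where N = sin²θ / (1 − cos²θ cos²(k−α)) and M is the 4×4 matrix with M₀₀ = 1/N, first row and column otherwise zero, and lower-right 3×3 block [[sin²(k−β), −cos(k−β)sin(k−β), cotθ sin(k−β)sin(k−α)], [−cos(k−β)sin(k−β), cos²(k−β), −cotθ cos(k−β)sin(k−α)], [cotθ sin(k−β)sin(k−α), −cotθ cos(k−β)sin(k−α), cot²θ sin²(k−α)]]. Then A¹_k is a projection: (A¹_k)² = A¹_k. -/

import Mathlib

open Complex Matrix

/-- The matrix A¹_k = N·M of Eq. (22): the Pauli-basis projector onto the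
fixed subspace of the walk superoperator. -/
noncomputable def A1 (k θ α β : ℝ) : Matrix (Fin 4) (Fin 4) ℝ :=
  let N : ℝ := Real.sin θ ^ 2 / (1 - Real.cos θ ^ 2 * Real.cos (k - α) ^ 2)
  let ct : ℝ := Real.cos θ / Real.sin θ
  N • !![1 / N, 0, 0, 0;
     0, Real.sin (k-β) ^ 2, -(Real.cos (k-β) * Real.sin (k-β)),
        ct * Real.sin (k-β) * Real.sin (k-α);
     0, -(Real.cos (k-β) * Real.sin (k-β)), Real.cos (k-β) ^ 2,
        -(ct * Real.cos (k-β) * Real.sin (k-α));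
     0, ct * Real.sin (k-β) * Real.sin (k-α), -(ct * Real.cos (k-β) * Real.sin (k-α)),
        ct ^ 2 * Real.sin (k-α) ^ 2]

lemma proj_aux (N v0 v1 v2 : ℝ) (hN : N ≠ 0) (hv : N * (v0^2 + v1^2 + v2^2) = 1) :
    (N • !![1/N, 0, 0, 0;
      0, v0*v0, v0*v1, v0*v2;
      0, v1*v0, v1*v1, v1*v2;
      0, v2*v0, v2*v1, v2*v2]) *
    (N • !![1/N, 0, 0, 0;
      0, v0*v0, v0*v1, v0*v2;
      0, v1*v0, v1*v1, v1*v2;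
      0, v2*v0, v2*v1, v2*v2]) =
    (N • !![1/N, 0, 0, 0;
      0, v0*v0, v0*v1, v0*v2;
      0, v1*v0, v1*v1, v1*v2;
      0, v2*v0, v2*v1, v2*v2]) := by
  ext i j
  fin_cases i <;> fin_cases j <;>
    simp [Matrix.mul_apply, Fin.sum_univ_four, Matrix.smul_apply,
      Matrix.vecHead, Matrix.vecTail]
  all_goals try field_simp
  all_goals (first | ring1 | linear_combination N * v0 * v0 * hv | linear_combination N * v0 * v1 * hv | linear_combination N * v0 * v2 * hv | linear_combination N * v1 * v1 * hv | linear_combination N * v1 * v2 * hv | linear_combination N * v2 * v2 * hv | linear_combination v0 * v0 * hv | linear_combination v0 * v1 * hv | linear_combination v0 * v2 * hv | linear_combination v1 * v1 * hv | linear_combination v1 * v2 * hv | linear_combination v2 * v2 * hv)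

/-- A¹_k is a projection. -/
theorem A1_projection (k θ α β : ℝ) (h1 : Real.sin θ ≠ 0)
    (h2 : Real.cos θ ^ 2 * Real.cos (k - α) ^ 2 ≠ 1) :
    A1 k θ α β * A1 k θ α β = A1 k θ α β := by
  have hd : 1 - Real.cos θ ^ 2 * Real.cos (k - α) ^ 2 ≠ 0 := by
    intro h; apply h2; linarith [sub_eq_zero.mp h]
  set N : ℝ := Real.sin θ ^ 2 / (1 - Real.cos θ ^ 2 * Real.cos (k - α) ^ 2) with hNdef
  have hN : N ≠ 0 := div_ne_zero (pow_ne_zero 2 h1) hd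
  set ct : ℝ := Real.cos θ / Real.sin θ with hct
  have hkey : A1 k θ α β = N • !![1/N, 0, 0, 0;
      0, Real.sin (k-β)*Real.sin (k-β), Real.sin (k-β)*(-Real.cos (k-β)),
        Real.sin (k-β)*(ct*Real.sin (k-α));
      0, (-Real.cos (k-β))*Real.sin (k-β), (-Real.cos (k-β))*(-Real.cos (k-β)),
        (-Real.cos (k-β))*(ct*Real.sin (k-α));
      0, (ct*Real.sin (k-α))*Real.sin (k-β), (ct*Real.sin (k-α))*(-Real.cos (k-β)),
        (ct*Real.sin (k-α))*(ct*Real.sin (k-α))] := by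
    unfold A1
    rw [← hNdef, ← hct]
    ext i j
    fin_cases i <;> fin_cases j <;> simp [Matrix.vecHead, Matrix.vecTail] <;> first | ring1 | tauto | (left; ring1)
  rw [hkey]
  apply proj_aux _ _ _ _ hN
  have hpy : Real.sin θ ^ 2 + Real.cos θ ^ 2 = 1 := Real.sin_sq_add_cos_sq θ
  have hpa : Real.sin (k-α) ^ 2 + Real.cos (k-α) ^ 2 = 1 := Real.sin_sq_add_cos_sq (k-α)
  have hpb : Real.sin (k-β) ^ 2 + Real.cos (k-β) ^ 2 = 1 := Real.sin_sq_add_cos_sq (k-β)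
  rw [hNdef, hct]
  field_simp
  linear_combination Real.sin θ ^ 2 * hpb + Real.cos θ ^ 2 * hpa + hpy
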